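/- Let X and Y be topological spaces equipped, and define W ⊆ X × Y to be IPZ-open if and only if π_X(W) is open in the pseudo-Zariski topology on X and, for every x ∈ π_X(W), the slice {y ∈ Y : (x,y) ∈ W} is open in the pseudo-Zariski topology on Y. Then the collection of IPZ-open sets is a topology on X × Y. -/
import Mathlib


/-- A set is pseudo-Zariski open if it is empty, or open and dense. -/
def pZOpen (Z : Type*) [TopologicalSpace Z] (U : Set Z) : Prop :=
  U = ∅ ∨ (IsOpen U ∧ Dense U)

/-- `W ⊆ X × Y` is IPZ-open iff its projection to `X` is pseudo-Zariski open and
every slice over a point of the projection is pseudo-Zariski open in `Y`. -/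
def IPZOpen (X Y : Type*) [TopologicalSpace X] [TopologicalSpace Y]
    (W : Set (X × Y)) : Prop :=
  pZOpen X (Prod.fst '' W) ∧ ∀ x ∈ Prod.fst '' W, pZOpen Y {y : Y | (x, y) ∈ W}

lemma pZOpen.isOpen' {Z : Type*} [TopologicalSpace Z] {U : Set Z} (h : pZOpen Z U) :
    IsOpen U := by
  rcases h with h | h
  · simp [h]
  · exact h.1

lemma pZOpen_inter {Z : Type*} [TopologicalSpace Z] {U V : Set Z}
    (hU : pZOpen Z U) (hV : pZOpen Z V) : pZOpen Z (U ∩ V) := by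
  rcases hU with h | hU
  · left; simp [h]
  rcases hV with h | hV
  · left; simp [h]
  exact Or.inr ⟨hU.1.inter hV.1, hU.2.inter_of_isOpen_left hV.2 hU.1⟩

lemma pZOpen_iUnion {Z : Type*} [TopologicalSpace Z] {ι : Sort*} {f : ι → Set Z}
    (h : ∀ i, pZOpen Z (f i)) : pZOpen Z (⋃ i, f i) := by
  by_cases he : ∀ i, f i = (∅ : Set Z)
  · left; simp [he]
  · push_neg at he
    obtain ⟨i, hi⟩ := he
    have hfi := (h i).resolve_left hi.ne_empty
    exact Or.inr ⟨isOpen_iUnion fun j => (h j).isOpen',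
      hfi.2.mono (Set.subset_iUnion f i)⟩

lemma IPZOpen.slice {X Y : Type*} [TopologicalSpace X] [TopologicalSpace Y]
    {W : Set (X × Y)} (h : IPZOpen X Y W) {x : X} (hx : x ∈ Prod.fst '' W) :
    IsOpen {y : Y | (x, y) ∈ W} ∧ Dense {y : Y | (x, y) ∈ W} := by
  have hne : {y : Y | (x, y) ∈ W}.Nonempty := by
    obtain ⟨⟨a, b⟩, hw, rfl⟩ := hx
    exact ⟨b, hw⟩
  rcases h.2 x hx with h0 | h1
  · exact absurd h0 hne.ne_empty
  · exact h1

/-- Definition 2.10: the IPZ-open sets form a topology on `X × Y`. -/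
theorem IPZ_isTopology (X Y : Type*) [TopologicalSpace X] [TopologicalSpace Y] :
    IPZOpen X Y Set.univ ∧
    (∀ U V : Set (X × Y), IPZOpen X Y U → IPZOpen X Y V → IPZOpen X Y (U ∩ V)) ∧
    (∀ S : Set (Set (X × Y)), (∀ U ∈ S, IPZOpen X Y U) → IPZOpen X Y (⋃₀ S)) := by
  refine ⟨⟨?_, ?_⟩, ?_, ?_⟩
  · -- projection of univ
    by_cases h : Nonempty Y
    · right
      have : Prod.fst '' (Set.univ : Set (X × Y)) = Set.univ := by
        ext x; simp
      rw [this]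
      exact ⟨isOpen_univ, dense_univ⟩
    · left
      have : IsEmpty Y := not_nonempty_iff.mp h
      rw [Set.image_univ, Set.range_eq_empty]
  · intro x _
    right
    simp only [Set.mem_univ, Set.setOf_true]; exact (⟨isOpen_univ, dense_univ⟩ : IsOpen (Set.univ : Set Y) ∧ Dense (Set.univ : Set Y))
  · -- intersections
    intro U V hU hV
    have himg : Prod.fst '' (U ∩ V) = (Prod.fst '' U) ∩ (Prod.fst '' V) := by
      apply Set.Subset.antisymm (Set.image_inter_subset _ _ _)
      rintro x ⟨hxU, hxV⟩
      obtain ⟨oU, dU⟩ := hU.slice hxU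
      obtain ⟨oV, dV⟩ := hV.slice hxV
      obtain ⟨⟨a, b⟩, hw, rfl⟩ := hxU
      have : Nonempty Y := ⟨b⟩
      obtain ⟨y, hyU, hyV⟩ := (dU.inter_of_isOpen_left dV oU).nonempty
      exact ⟨(a, y), ⟨hyU, hyV⟩, rfl⟩
    constructor
    · rw [himg]; exact pZOpen_inter hU.1 hV.1
    · intro x hx
      rw [himg] at hx
      obtain ⟨oU, dU⟩ := hU.slice hx.1
      obtain ⟨oV, dV⟩ := hV.slice hx.2
      exact Or.inr ⟨oU.inter oV, dU.inter_of_isOpen_left dV oU⟩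
  · -- unions
    intro S hS
    constructor
    · have himg : Prod.fst '' ⋃₀ S = ⋃ U : S, Prod.fst '' (U : Set (X × Y)) := by
        rw [Set.sUnion_eq_iUnion, Set.image_iUnion]
      rw [himg]
      exact pZOpen_iUnion fun U => (hS U U.2).1
    · intro x _
      have hsl : {y : Y | (x, y) ∈ ⋃₀ S} = ⋃ U : S, {y : Y | (x, y) ∈ (U : Set (X × Y))} := by
        ext y; simp [Set.mem_sUnion]
      rw [hsl]
      refine pZOpen_iUnion fun U => ?_
      by_cases hx : x ∈ Prod.fst '' (U : Set (X × Y))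
      · exact (hS U U.2).2 x hx
      · left
        ext y
        simp only [Set.mem_setOf_eq, Set.mem_empty_iff_false, iff_false]
        intro hy
        exact hx ⟨(x, y), hy, rfl⟩
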